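/- Let M be a t×n binary matrix and j a column index. If S and S' are subsets of [t] such that S is (M,j)-private and S' is (M,j')-private with j ≠ j', then S ≠ S'. Consequently, if every column j of M admits an (M,j)-private set of size at most m, then n ≤ Σ_{i=0}^{m} C(t, i). -/

import Mathlib

/-- `S ⊆ [t]` is `(M,j)`-private: `M i j = 1` for all `i ∈ S`, and every other
column `j'` has a zero inside `S`. -/
def IsPrivate {t n : ℕ} (M : Fin t → Fin n → Bool) (j : Fin n) (S : Finset (Fin t)) : Prop :=
  (∀ i ∈ S, M i j = true) ∧ ∀ j' : Fin n, j' ≠ j → ∃ i ∈ S, M i j' = false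

lemma priv_ne {t n : ℕ} (M : Fin t → Fin n → Bool) (j j' : Fin n)
    (S S' : Finset (Fin t)) (hjj : j ≠ j')
    (h : IsPrivate M j S) (h' : IsPrivate M j' S') : S ≠ S' := by
  rintro rfl
  obtain ⟨i, hi, hz⟩ := h.2 j' (Ne.symm hjj)
  have := h'.1 i hi
  simp [this] at hz

theorem stmt4 (t n m : ℕ) (M : Fin t → Fin n → Bool) :
    (∀ (j j' : Fin n) (S S' : Finset (Fin t)), j ≠ j' →
      IsPrivate M j S → IsPrivate M j' S' → S ≠ S') ∧
    ((∀ j : Fin n, ∃ S : Finset (Fin t), IsPrivate M j S ∧ S.card ≤ m) →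
      n ≤ ∑ i ∈ Finset.range (m + 1), Nat.choose t i) := by
  refine ⟨fun j j' S S' hjj h h' => priv_ne M j j' S S' hjj h h', fun h => ?_⟩
  choose f hf hc using h
  have hinj : Function.Injective f := by
    intro a b hab
    by_contra hne
    exact priv_ne M a b (f a) (f b) hne (hf a) (hf b) hab
  set T : Finset (Finset (Fin t)) :=
    (Finset.range (m + 1)).biUnion (fun i => Finset.powersetCard i Finset.univ) with hT
  have hmem : ∀ j, f j ∈ T := by
    intro j
    simp only [hT, Finset.mem_biUnion, Finset.mem_range, Finset.mem_powersetCard]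
    exact ⟨(f j).card, Nat.lt_succ_of_le (hc j), Finset.subset_univ _, rfl⟩
  have hcard : n ≤ T.card := by
    have := Finset.card_le_card_of_injOn (s := Finset.univ) f (fun j _ => hmem j)
      (fun a _ b _ hab => hinj hab)
    simpa using this
  refine hcard.trans ?_
  rw [hT]
  refine (Finset.card_biUnion ?_).le.trans ?_
  · intro a ha b hb hab
    simp only [Finset.disjoint_left, Finset.mem_powersetCard]
    rintro s ⟨-, rfl⟩ ⟨-, h2⟩
    rw [h2] at hab; exact hab rfl
  · apply le_of_eq
    refine Finset.sum_congr rfl fun i _ => ?_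
    rw [Finset.card_powersetCard, Finset.card_univ, Fintype.card_fin]
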